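/- arXiv:2411.05334 — 2 statements merged into one kernel-verified Lean document; each statement's English description precedes it below -/
import Mathlib

section
/- Closed forms of the characteristic sequences of a double almost-Riordan array: Suppose s ∈ K[[t]] is odd with [t]s ≠ 0 and s² = f₁·f₂, and s̄ is odd with [t]s̄ ≠ 0, s∘s̄ = t and s̄∘s = t. Suppose Ã, Z̃₁, Z̃₂, W̃ ∈ K[[t]] satisfy: f₁·f₂ = t²·(Ã∘(f₁f₂)); g·(1 − t²·(Z̃₁∘(f₁f₂))) = g₀; b₀·t²·g·(Z̃₂∘(f₁f₂)) = g₀·f_{1,1}·t²·g + f₂·(b₀·g·f₁ − g₀·f_{1,1}·t·b); and b₀·f₂·(b − b₀) = b₂·t²·b·f₂ + t³·g·(b₀·(W̃∘(f₁f₂)) − b₂), where b₂ = [t²]b. Then the even generating functions A := Ã∘(t²), Z₁ := Z̃₁∘(t²), Z₂ := Z̃₂∘(t²), W := W̃∘(t²) satisfy: (i) A·s̄² = t² (i.e., A(t) = t²/s̄²); (ii) Z₁·s̄²·(g∘s̄) = (g∘s̄) − g₀ (i.e., Z₁(t) = (1/s̄²)(1 − g₀/g(s̄))); (iii) b₀·s̄²·(g∘s̄)·Z₂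 = g₀·f_{1,1}·s̄²·(g∘s̄) + b₀·t²·(g∘s̄) − g₀·f_{1,1}·s̄·(b∘s̄)·(f₂∘s̄); (iv) b₀·s̄³·(g∘s̄)·W = (f₂∘s̄)·((b₀ − b₂·s̄²)·(b∘s̄) − b₀²) + b₂·s̄³·(g∘s̄). -/
open PowerSeries

variable {K : Type*} [Field K]

/-- Formal substitution `U ∘ h` of a power series `h` (intended with `h(0) = 0`)
into a power series `U`:  `[tⁿ](U∘h) = Σ_{j≤n} ([tʲ]U)·[tⁿ](hʲ)`. -/
noncomputable def psComp (U h : PowerSeries K) : PowerSeries K :=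
  PowerSeries.mk fun n => ∑ j ∈ Finset.range (n + 1), coeff j U * coeff n (h ^ j)



lemma coeff_psComp (U h : PowerSeries K) (n : ℕ) :
    coeff n (psComp U h) = ∑ j ∈ Finset.range (n + 1), coeff j U * coeff n (h ^ j) := by
  simp [psComp]

lemma coeff_pow_eq_zero_of_lt {h : PowerSeries K} (h0 : constantCoeff h = 0)
    {n j : ℕ} (hj : n < j) : coeff n (h ^ j) = 0 := by
  obtain ⟨r, rfl⟩ := X_dvd_iff.mpr h0
  rw [mul_pow, coeff_mul]
  refine Finset.sum_eq_zero fun ab hab => ?_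
  rw [Finset.HasAntidiagonal.mem_antidiagonal] at hab
  rw [coeff_X_pow, if_neg (by omega), zero_mul]

lemma coeff_eval₂_eq_zero {h : PowerSeries K} (h0 : constantCoeff h = 0)
    {n : ℕ} {p : Polynomial K} (hp : ∀ j ≤ n, p.coeff j = 0) :
    coeff n (p.eval₂ (C) h) = 0 := by
  rw [Polynomial.eval₂_eq_sum, Polynomial.sum_def, map_sum]
  refine Finset.sum_eq_zero fun j hj => ?_
  rw [coeff_C_mul]
  by_cases hjn : j ≤ n
  · rw [hp j hjn, zero_mul]
  · rw [coeff_pow_eq_zero_of_lt h0 (by omega), mul_zero]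

lemma coeff_eval₂_congr {h : PowerSeries K} (h0 : constantCoeff h = 0)
    {n : ℕ} {p q : Polynomial K} (hpq : ∀ j ≤ n, p.coeff j = q.coeff j) :
    coeff n (p.eval₂ (C) h) = coeff n (q.eval₂ (C) h) := by
  have := coeff_eval₂_eq_zero h0 (p := p - q) (n := n)
    (fun j hj => by simp [hpq j hj])
  rw [Polynomial.eval₂_sub, map_sub, sub_eq_zero] at this
  exact this

lemma coeff_psComp_trunc {h : PowerSeries K} (h0 : constantCoeff h = 0)
    (U : PowerSeries K) {n N : ℕ} (hn : n < N) :
    coeff n (psComp U h) = coeff n ((trunc N U).eval₂ (C) h) := by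
  rw [eval₂_trunc_eq_sum_range, map_sum, coeff_psComp]
  simp only [coeff_C_mul]
  refine Finset.sum_subset (Finset.range_subset_range.mpr hn) fun i hi hni => ?_
  rw [Finset.mem_range] at hi hni
  rw [coeff_pow_eq_zero_of_lt h0 (by omega), mul_zero]

lemma psComp_add (U V h : PowerSeries K) :
    psComp (U + V) h = psComp U h + psComp V h := by
  ext n
  simp [coeff_psComp, add_mul, Finset.sum_add_distrib]

lemma psComp_sub (U V h : PowerSeries K) :
    psComp (U - V) h = psComp U h - psComp V h := by
  ext n
  simp [coeff_psComp, sub_mul, Finset.sum_sub_distrib]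

lemma psComp_C (a : K) (h : PowerSeries K) : psComp (C a) h = C a := by
  ext n
  rw [coeff_psComp]
  simp [coeff_C, ite_mul, Finset.sum_ite_eq', coeff_one]

lemma psComp_one (h : PowerSeries K) : psComp 1 h = 1 := by
  rw [← map_one (C), psComp_C, map_one]

lemma psComp_X {h : PowerSeries K} (h0 : constantCoeff h = 0) : psComp X h = h := by
  ext n
  rw [coeff_psComp]
  simp only [coeff_X, ite_mul, one_mul, zero_mul, Finset.sum_ite_eq', Finset.mem_range]
  rcases n with _ | n
  · simpa using h0.symm
  · simp

lemma psComp_mul {h : PowerSeries K} (h0 : constantCoeff h = 0) (U V : PowerSeries K) :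
    psComp (U * V) h = psComp U h * psComp V h := by
  ext n
  set N := n + 1 with hN
  calc coeff n (psComp (U * V) h)
      = coeff n ((trunc N (U * V)).eval₂ (C) h) := coeff_psComp_trunc h0 _ n.lt_succ_self
    _ = coeff n ((trunc N U * trunc N V).eval₂ (C) h) := by
        refine coeff_eval₂_congr h0 fun j hj => ?_
        rw [coeff_trunc, if_pos (by omega), ← Polynomial.coeff_coe, Polynomial.coe_mul,
          ← coeff_mul_eq_coeff_trunc_mul_trunc U V (by omega)]
    _ = coeff n ((trunc N U).eval₂ (C) h * (trunc N V).eval₂ (C) h) := by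
        rw [Polynomial.eval₂_mul]
    _ = coeff n (psComp U h * psComp V h) := by
        rw [coeff_mul, coeff_mul]
        refine Finset.sum_congr rfl fun ab hab => ?_
        rw [Finset.HasAntidiagonal.mem_antidiagonal] at hab
        rw [← coeff_psComp_trunc h0 U (by omega), ← coeff_psComp_trunc h0 V (by omega)]

lemma psComp_pow {h : PowerSeries K} (h0 : constantCoeff h = 0) (U : PowerSeries K) :
    ∀ k : ℕ, psComp (U ^ k) h = (psComp U h) ^ k
  | 0 => by rw [pow_zero, pow_zero, psComp_one]
  | (k+1) => by rw [pow_succ, pow_succ, psComp_mul h0, psComp_pow h0 U k]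

lemma psComp_assoc {h h' : PowerSeries K} (h0 : constantCoeff h = 0)
    (h'0 : constantCoeff h' = 0) (U : PowerSeries K) :
    psComp (psComp U h) h' = psComp U (psComp h h') := by
  ext n
  rw [coeff_psComp, coeff_psComp]
  have expand : ∀ j ∈ Finset.range (n + 1),
      coeff j (psComp U h) * coeff n (h' ^ j) =
      ∑ i ∈ Finset.range (n + 1), coeff i U * coeff j (h ^ i) * coeff n (h' ^ j) := by
    intro j hj
    rw [Finset.mem_range] at hj
    rw [coeff_psComp, Finset.sum_mul]
    refine Finset.sum_subset (Finset.range_subset_range.mpr (by omega)) fun i hi hni => ?_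
    rw [Finset.mem_range] at hi hni
    rw [coeff_pow_eq_zero_of_lt h0 (by omega), mul_zero, zero_mul]
  rw [Finset.sum_congr rfl expand, Finset.sum_comm]
  refine Finset.sum_congr rfl fun i _ => ?_
  simp only [mul_assoc, ← Finset.mul_sum]
  congr 1
  rw [← coeff_psComp, psComp_pow h'0]

/-- The `(n,k)` entry of the double almost-Riordan array `(b | g ; f₁, f₂)`:
column 0 is `b`, column `2ℓ+1` is `t·g·(f₁f₂)^ℓ`, column `2ℓ+2` is `t·g·f₁·(f₁f₂)^ℓ`. -/
noncomputable def dar (b g f₁ f₂ : PowerSeries K) (n k : ℕ) : K :=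
  if k = 0 then coeff n b
  else if k % 2 = 1 then coeff n (X * g * (f₁ * f₂) ^ ((k - 1) / 2))
  else coeff n (X * g * f₁ * (f₁ * f₂) ^ ((k - 2) / 2))

/-- Closed forms of the characteristic sequences of a double almost-Riordan array. -/
theorem dar_seq_closed_forms
    (b g f₁ f₂ : PowerSeries K)
    (hbe : ∀ k, coeff (2 * k + 1) b = 0)
    (hge : ∀ k, coeff (2 * k + 1) g = 0)
    (hb0 : constantCoeff b ≠ 0)
    (hg0 : constantCoeff g ≠ 0)
    (hf₁o : ∀ k, coeff (2 * k) f₁ = 0)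
    (hf₂o : ∀ k, coeff (2 * k) f₂ = 0)
    (hf₁1 : coeff 1 f₁ ≠ 0)
    (hf₂1 : coeff 1 f₂ ≠ 0)
    (s sb : PowerSeries K)
    (hso : ∀ k, coeff (2 * k) s = 0)
    (hs1 : coeff 1 s ≠ 0)
    (hs2 : s ^ 2 = f₁ * f₂)
    (hsbo : ∀ k, coeff (2 * k) sb = 0)
    (hsb1 : coeff 1 sb ≠ 0)
    (hssb : psComp s sb = X)
    (hsbs : psComp sb s = X)
    (At Z₁t Z₂t Wt : PowerSeries K)
    (hA : f₁ * f₂ = X ^ 2 * psComp At (f₁ * f₂))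
    (hZ₁ : g * (1 - X ^ 2 * psComp Z₁t (f₁ * f₂)) = C (constantCoeff g))
    (hZ₂ : C (constantCoeff b) * X ^ 2 * g * psComp Z₂t (f₁ * f₂) =
        C (constantCoeff g * coeff 1 f₁) * X ^ 2 * g +
          f₂ * (C (constantCoeff b) * g * f₁ -
            C (constantCoeff g * coeff 1 f₁) * X * b))
    (hW : C (constantCoeff b) * f₂ * (b - C (constantCoeff b)) =
        C (coeff 2 b) * X ^ 2 * b * f₂ +
          X ^ 3 * g * (C (constantCoeff b) * psComp Wt (f₁ * f₂) - C (coeff 2 b))) :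
    psComp At (X ^ 2) * sb ^ 2 = X ^ 2 ∧
    psComp Z₁t (X ^ 2) * sb ^ 2 * psComp g sb =
      psComp g sb - C (constantCoeff g) ∧
    C (constantCoeff b) * sb ^ 2 * psComp g sb * psComp Z₂t (X ^ 2) =
      C (constantCoeff g * coeff 1 f₁) * sb ^ 2 * psComp g sb +
        C (constantCoeff b) * X ^ 2 * psComp g sb -
        C (constantCoeff g * coeff 1 f₁) * sb * psComp b sb * psComp f₂ sb ∧
    C (constantCoeff b) * sb ^ 3 * psComp g sb * psComp Wt (X ^ 2) =
      psComp f₂ sb *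
          ((C (constantCoeff b) - C (coeff 2 b) * sb ^ 2) * psComp b sb -
            C (constantCoeff b ^ 2)) +
        C (coeff 2 b) * sb ^ 3 * psComp g sb := by
  have sb0 : constantCoeff sb = 0 := by
    rw [← coeff_zero_eq_constantCoeff_apply]; simpa using hsbo 0
  have f₂0 : constantCoeff f₂ = 0 := by
    rw [← coeff_zero_eq_constantCoeff_apply]; simpa using hf₂o 0
  have ff0 : constantCoeff (f₁ * f₂) = 0 := by simp [f₂0]
  have Hmul : ∀ U V : PowerSeries K, psComp (U * V) sb = psComp U sb * psComp V sb :=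
    psComp_mul sb0
  have Hsub : ∀ U V : PowerSeries K, psComp (U - V) sb = psComp U sb - psComp V sb :=
    psComp_sub (h := sb)
  have Hpow : ∀ (U : PowerSeries K) (k : ℕ), psComp (U ^ k) sb = (psComp U sb) ^ k :=
    fun U k => psComp_pow sb0 U k
  have HX : psComp X sb = sb := psComp_X sb0
  have HC : ∀ a : K, psComp (C a) sb = C a := fun a => psComp_C a sb
  have Hone : psComp 1 sb = 1 := psComp_one sb
  have hfs : psComp (f₁ * f₂) sb = X ^ 2 := by rw [← hs2, Hpow, hssb]
  have hcomp : ∀ U : PowerSeries K, psComp (psComp U (f₁ * f₂)) sb = psComp U (X ^ 2) :=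
    fun U => by rw [psComp_assoc ff0 sb0, hfs]
  have hprod : psComp f₁ sb * psComp f₂ sb = X ^ 2 := by rw [← Hmul, hfs]
  have e1 := congrArg (fun U => psComp U sb) hA
  simp only [Hmul, Hpow, HX, hcomp, hfs] at e1
  have e2 := congrArg (fun U => psComp U sb) hZ₁
  simp only [Hmul, Hsub, Hone, Hpow, HX, HC, hcomp] at e2
  have e3 := congrArg (fun U => psComp U sb) hZ₂
  simp only [Hmul, psComp_add, Hsub, Hone, Hpow, HX, HC, hcomp] at e3
  have e4 := congrArg (fun U => psComp U sb) hW
  simp only [Hmul, psComp_add, Hsub, Hone, Hpow, HX, HC, hcomp] at e4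
  refine ⟨by linear_combination hprod - e1, by linear_combination -e2, ?_, ?_⟩
  · linear_combination e3 + C (constantCoeff b) * psComp g sb * hprod
  · rw [map_pow]
    linear_combination -e4
end

section
/- Production matrix of a double almost-Riordan array: Suppose Ã, Z̃₁, Z̃₂, W̃ ∈ K[[t]] satisfy: f₁·f₂ = t²·(Ã∘(f₁f₂)); g·(1 − t²·(Z̃₁∘(f₁f₂))) = g₀; b₀·t²·g·(Z̃₂∘(f₁f₂)) = g₀·f_{1,1}·t²·g + f₂·(b₀·g·f₁ − g₀·f_{1,1}·t·b); and b₀·f₂·(b − b₀) = b₂·t²·b·f₂ + t³·g·(b₀·(W̃∘(f₁f₂)) − b₂), where b₂ = [t²]b. Put A := Ã∘(t²), Z₁ := Z̃₁∘(t²), Z₂ := Z̃₂∘(t²), W := W̃∘(t²), and define the infinite matrix P = (p_{j,k})_{j,k≥0} by its column generating functions: p_{j,0} = [t^j]W, p_{j,1} = [t^j](t·Z₁), p_{j,2} = [t^j]Z₂, and p_{j,k} = [t^j](t^{k−2}·A) for k ≥ 3. Then for all n, k ≥ 0, Σ_{j=0}^{n} d_{n,j}·p_{j,k} = d_{n+2,k};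 that is, D·P equals the matrix obtained from D by deleting its first two rows, so P = (W(t), tZ₁(t), Z₂(t), tA(t), t²A(t), t³A(t), …) is the production matrix of D = (b|g;f₁,f₂). -/
open PowerSeries

variable {K : Type*} [Field K]

open Finset

lemma coeff_zero_of_lt {S : PowerSeries K} {m n : ℕ} (h : (X : PowerSeries K)^m ∣ S)
    (hn : n < m) : coeff n S = 0 := (X_pow_dvd_iff.mp h) n hn

lemma X_pow_dvd_pow {h : PowerSeries K} (hh : constantCoeff h = 0) (j : ℕ) :
    (X : PowerSeries K)^j ∣ h^j :=
  pow_dvd_pow_of_dvd (X_dvd_iff.mpr hh) j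

lemma coeff_pow_eq_zero {h : PowerSeries K} (hh : constantCoeff h = 0) {n j : ℕ}
    (hj : n < j) : coeff n (h^j) = 0 :=
  coeff_zero_of_lt (X_pow_dvd_pow hh j) hj

lemma coeff_mul_psComp (G U h : PowerSeries K) (hh : constantCoeff h = 0) (n : ℕ) :
    coeff n (G * psComp U h) =
      ∑ j ∈ range (n + 1), coeff j U * coeff n (G * h ^ j) := by
  rw [coeff_mul]
  have step : ∀ p ∈ Finset.HasAntidiagonal.antidiagonal n,
      coeff p.1 G * coeff p.2 (psComp U h) =
      ∑ j ∈ range (n + 1), coeff j U * (coeff p.1 G * coeff p.2 (h ^ j)) := by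
    rintro ⟨p, q⟩ hpq
    rw [Finset.HasAntidiagonal.mem_antidiagonal] at hpq
    have hq : q ≤ n := by omega
    have : coeff q (psComp U h) = ∑ j ∈ range (n + 1), coeff j U * coeff q (h ^ j) := by
      rw [psComp, coeff_mk]
      refine Finset.sum_subset (by intro x hx; simp only [mem_range] at *; omega) ?_
      intro j hj hj'
      simp only [mem_range, not_lt] at hj'
      rw [coeff_pow_eq_zero hh (by omega), mul_zero]
    rw [this, Finset.mul_sum]
    refine Finset.sum_congr rfl fun j _ => by ring
  rw [Finset.sum_congr rfl step, Finset.sum_comm]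
  refine Finset.sum_congr rfl fun j _ => ?_
  rw [← Finset.mul_sum, coeff_mul]

lemma coeff_psComp_zero (U h : PowerSeries K) :
    constantCoeff (psComp U h) = coeff 0 U := by
  rw [← coeff_zero_eq_constantCoeff_apply, psComp, coeff_mk]
  simp

lemma psComp_shift (U h : PowerSeries K) (hh : constantCoeff h = 0) :
    psComp U h = C (coeff 0 U) + h * psComp (mk fun i => coeff (i + 1) U) h := by
  ext n
  have h1 : coeff n (psComp U h) = coeff n ((1 : PowerSeries K) * psComp U h) := by
    rw [one_mul]
  rw [h1, coeff_mul_psComp _ _ _ hh, map_add,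
    coeff_mul_psComp h (mk fun i => coeff (i + 1) U) h hh]
  rw [Finset.sum_range_succ' (fun j => coeff j U * coeff n ((1:PowerSeries K) * h ^ j)) n]
  have h2 : ∑ j ∈ range (n + 1), coeff j (mk fun i => coeff (i + 1) U) *
      coeff n (h * h ^ j)
      = ∑ j ∈ range n, coeff (j + 1) U * coeff n ((1:PowerSeries K) * h ^ (j + 1)) := by
    rw [Finset.sum_range_succ]
    have : coeff n (h * h ^ n) = 0 := by
      rw [← pow_succ']
      exact coeff_pow_eq_zero hh (by omega)
    rw [this, mul_zero, add_zero]
    refine Finset.sum_congr rfl fun j _ => ?_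
    rw [coeff_mk, one_mul, pow_succ']
  rw [h2]
  simp only [pow_zero, one_mul, map_one]
  ring_nf
  rw [coeff_C]
  by_cases hn : n = 0 <;> simp [hn]

lemma coeff_psComp_sq (U : PowerSeries K) (s j : ℕ) :
    coeff j ((X : PowerSeries K) ^ s * psComp U (X ^ 2)) =
      if s ≤ j ∧ (j - s) % 2 = 0 then coeff ((j - s) / 2) U else 0 := by
  rw [coeff_X_pow_mul']
  by_cases hs : s ≤ j
  · rw [if_pos hs]
    rw [psComp, coeff_mk]
    have hc : ∀ i : ℕ, coeff (j - s) (((X : PowerSeries K) ^ 2) ^ i) =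
        if j - s = 2 * i then 1 else 0 := by
      intro i; rw [← pow_mul, coeff_X_pow]
    by_cases hp : (j - s) % 2 = 0
    · rw [if_pos ⟨hs, hp⟩]
      rw [Finset.sum_eq_single ((j - s) / 2)]
      · rw [hc, if_pos (by omega), mul_one]
      · intro i _ hi; rw [hc, if_neg (by omega), mul_zero]
      · intro hmem; exfalso; apply hmem; rw [mem_range]; omega
    · rw [if_neg (by tauto)]
      refine Finset.sum_eq_zero fun i _ => ?_
      rw [hc, if_neg (by omega), mul_zero]
  · rw [if_neg hs, if_neg (by tauto)]

lemma sum_sieve (n s : ℕ) (w : ℕ → K) (hw : ∀ i, n < s + 2 * i → w i = 0) :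
    (∑ j ∈ range (n + 1), if s ≤ j ∧ (j - s) % 2 = 0 then w ((j - s) / 2) else 0) =
      ∑ i ∈ range (n + 1), w i := by
  have step : ∀ j ∈ range (n + 1),
      (if s ≤ j ∧ (j - s) % 2 = 0 then w ((j - s) / 2) else 0) =
      ∑ i ∈ range (n + 1), if j = s + 2 * i then w i else 0 := by
    intro j hj
    rw [mem_range] at hj
    by_cases hc : s ≤ j ∧ (j - s) % 2 = 0
    · rw [if_pos hc, Finset.sum_eq_single ((j - s) / 2)]
      · rw [if_pos (by omega)]
      · intro i _ hi; rw [if_neg (by omega)]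
      · intro hmem; exfalso; apply hmem; rw [mem_range]; omega
    · rw [if_neg hc]
      refine (Finset.sum_eq_zero fun i _ => ?_).symm
      rw [if_neg (by omega)]
  rw [Finset.sum_congr rfl step, Finset.sum_comm]
  refine Finset.sum_congr rfl fun i hi => ?_
  rw [mem_range] at hi
  rw [Finset.sum_ite_eq' (range (n + 1)) (s + 2 * i) (fun _ => w i)]
  by_cases hle : s + 2 * i ≤ n
  · rw [if_pos (by rw [mem_range]; omega)]
  · rw [if_neg (by rw [mem_range]; omega), hw i (by omega)]

lemma helperA (b g f₁ f₂ U : PowerSeries K)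
    (hF2 : (X : PowerSeries K) ^ 2 ∣ f₁ * f₂) (hF0 : constantCoeff (f₁ * f₂) = 0)
    (n s : ℕ) (hs : s % 2 = 1) :
    (∑ j ∈ range (n + 1), dar b g f₁ f₂ n j *
        (if s ≤ j ∧ (j - s) % 2 = 0 then coeff ((j - s) / 2) U else 0)) =
      coeff n (X * g * (f₁ * f₂) ^ ((s - 1) / 2) * psComp U (f₁ * f₂)) := by
  have hGF : ∀ i : ℕ,
      X * g * (f₁ * f₂) ^ ((s - 1) / 2) * (f₁ * f₂) ^ i
        = X * g * (f₁ * f₂) ^ ((s - 1) / 2 + i) := by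
    intro i; rw [pow_add, mul_assoc]
  have hzero : ∀ i : ℕ, n < s + 2 * i →
      coeff n (X * g * (f₁ * f₂) ^ ((s - 1) / 2) * (f₁ * f₂) ^ i) = 0 := by
    intro i hi
    rw [hGF]
    refine coeff_zero_of_lt (m := 1 + 2 * ((s - 1) / 2 + i)) ?_ (by omega)
    have he : (X : PowerSeries K) ^ (1 + 2 * ((s - 1) / 2 + i))
        = X * ((X : PowerSeries K) ^ 2) ^ ((s - 1) / 2 + i) := by
      rw [pow_add, pow_mul, pow_one]
    rw [he]
    exact mul_dvd_mul (dvd_mul_right X g) (pow_dvd_pow_of_dvd hF2 _)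
  have step : ∀ j ∈ range (n + 1),
      dar b g f₁ f₂ n j * (if s ≤ j ∧ (j - s) % 2 = 0 then coeff ((j - s) / 2) U else 0) =
      (if s ≤ j ∧ (j - s) % 2 = 0 then
        coeff ((j - s) / 2) U *
          coeff n (X * g * (f₁ * f₂) ^ ((s - 1) / 2) * (f₁ * f₂) ^ ((j - s) / 2)) else 0) := by
    intro j _
    by_cases hc : s ≤ j ∧ (j - s) % 2 = 0
    · rw [if_pos hc, if_pos hc]
      have hj0 : j ≠ 0 := by omega
      have hj1 : j % 2 = 1 := by omega
      have hdar : dar b g f₁ f₂ n j = coeff n (X * g * (f₁ * f₂) ^ ((j - 1) / 2)) := by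
        rw [dar, if_neg hj0, if_pos hj1]
      rw [hdar, hGF]
      have he : (s - 1) / 2 + (j - s) / 2 = (j - 1) / 2 := by omega
      rw [he]; ring
    · rw [if_neg hc, if_neg hc, mul_zero]
  rw [Finset.sum_congr rfl step,
    sum_sieve n s
      (fun i => coeff i U *
        coeff n (X * g * (f₁ * f₂) ^ ((s - 1) / 2) * (f₁ * f₂) ^ i))
      (fun i hi => by rw [hzero i hi, mul_zero]),
    ← coeff_mul_psComp _ _ _ hF0]

lemma helperB (b g f₁ f₂ U : PowerSeries K)
    (hF2 : (X : PowerSeries K) ^ 2 ∣ f₁ * f₂) (hF0 : constantCoeff (f₁ * f₂) = 0)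
    (hXf₁ : (X : PowerSeries K) ∣ f₁)
    (n s : ℕ) (hs : s % 2 = 0) (hs2 : 2 ≤ s) :
    (∑ j ∈ range (n + 1), dar b g f₁ f₂ n j *
        (if s ≤ j ∧ (j - s) % 2 = 0 then coeff ((j - s) / 2) U else 0)) =
      coeff n (X * g * f₁ * (f₁ * f₂) ^ ((s - 2) / 2) * psComp U (f₁ * f₂)) := by
  have hGF : ∀ i : ℕ,
      X * g * f₁ * (f₁ * f₂) ^ ((s - 2) / 2) * (f₁ * f₂) ^ i
        = X * g * f₁ * (f₁ * f₂) ^ ((s - 2) / 2 + i) := by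
    intro i; rw [pow_add, mul_assoc]
  have hzero : ∀ i : ℕ, n < s + 2 * i →
      coeff n (X * g * f₁ * (f₁ * f₂) ^ ((s - 2) / 2) * (f₁ * f₂) ^ i) = 0 := by
    intro i hi
    rw [hGF]
    refine coeff_zero_of_lt (m := 2 + 2 * ((s - 2) / 2 + i)) ?_ (by omega)
    have he : (X : PowerSeries K) ^ (2 + 2 * ((s - 2) / 2 + i))
        = X * X * ((X : PowerSeries K) ^ 2) ^ ((s - 2) / 2 + i) := by
      rw [pow_add, pow_mul]; ring
    rw [he]
    exact mul_dvd_mul (mul_dvd_mul (dvd_mul_right X g) hXf₁) (pow_dvd_pow_of_dvd hF2 _)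
  have step : ∀ j ∈ range (n + 1),
      dar b g f₁ f₂ n j * (if s ≤ j ∧ (j - s) % 2 = 0 then coeff ((j - s) / 2) U else 0) =
      (if s ≤ j ∧ (j - s) % 2 = 0 then
        coeff ((j - s) / 2) U *
          coeff n (X * g * f₁ * (f₁ * f₂) ^ ((s - 2) / 2) * (f₁ * f₂) ^ ((j - s) / 2))
        else 0) := by
    intro j _
    by_cases hc : s ≤ j ∧ (j - s) % 2 = 0
    · rw [if_pos hc, if_pos hc]
      have hj0 : j ≠ 0 := by omega
      have hj1 : ¬ (j % 2 = 1) := by omega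
      have hdar : dar b g f₁ f₂ n j = coeff n (X * g * f₁ * (f₁ * f₂) ^ ((j - 2) / 2)) := by
        rw [dar, if_neg hj0, if_neg hj1]
      rw [hdar, hGF]
      have he : (s - 2) / 2 + (j - s) / 2 = (j - 2) / 2 := by omega
      rw [he]; ring
    · rw [if_neg hc, if_neg hc, mul_zero]
  rw [Finset.sum_congr rfl step,
    sum_sieve n s
      (fun i => coeff i U *
        coeff n (X * g * f₁ * (f₁ * f₂) ^ ((s - 2) / 2) * (f₁ * f₂) ^ i))
      (fun i hi => by rw [hzero i hi, mul_zero]),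
    ← coeff_mul_psComp _ _ _ hF0]

lemma helperC (b g f₁ f₂ U : PowerSeries K)
    (hF2 : (X : PowerSeries K) ^ 2 ∣ f₁ * f₂) (hF0 : constantCoeff (f₁ * f₂) = 0)
    (hXf₁ : (X : PowerSeries K) ∣ f₁) (n : ℕ) :
    (∑ j ∈ range (n + 1), dar b g f₁ f₂ n j *
        (if 0 ≤ j ∧ (j - 0) % 2 = 0 then coeff ((j - 0) / 2) U else 0)) =
      coeff 0 U * coeff n b +
        coeff n (X * g * f₁ * psComp (mk fun i => coeff (i + 1) U) (f₁ * f₂)) := by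
  classical
  set w : ℕ → K := fun i =>
    if i = 0 then coeff 0 U * coeff n b
    else coeff i U * coeff n (X * g * f₁ * (f₁ * f₂) ^ (i - 1)) with hwdef
  have hdvd : ∀ m : ℕ, (X : PowerSeries K) ^ (2 + 2 * m) ∣ X * g * f₁ * (f₁ * f₂) ^ m := by
    intro m
    have he : (X : PowerSeries K) ^ (2 + 2 * m)
        = X * X * ((X : PowerSeries K) ^ 2) ^ m := by
      rw [pow_add, pow_mul]; ring
    rw [he]
    exact mul_dvd_mul (mul_dvd_mul (dvd_mul_right X g) hXf₁) (pow_dvd_pow_of_dvd hF2 _)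
  have hwz : ∀ i, n < 0 + 2 * i → w i = 0 := by
    intro i hi
    have hi0 : i ≠ 0 := by omega
    rw [hwdef]
    simp only [if_neg hi0]
    rw [coeff_zero_of_lt (hdvd (i - 1)) (by omega), mul_zero]
  have step : ∀ j ∈ range (n + 1),
      dar b g f₁ f₂ n j * (if 0 ≤ j ∧ (j - 0) % 2 = 0 then coeff ((j - 0) / 2) U else 0) =
      if 0 ≤ j ∧ (j - 0) % 2 = 0 then w ((j - 0) / 2) else 0 := by
    intro j _
    by_cases hc : j % 2 = 0
    · rw [if_pos ⟨Nat.zero_le _, by simpa using hc⟩, if_pos ⟨Nat.zero_le _, by simpa using hc⟩]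
      simp only [Nat.sub_zero]
      by_cases hj0 : j = 0
      · subst hj0
        have h0 : w 0 = coeff 0 U * coeff n b := by simp [hwdef]
        simp only [Nat.zero_div, h0]
        rw [dar, if_pos rfl]; ring
      · have hj2 : j / 2 ≠ 0 := by omega
        have h1 : w (j / 2) = coeff (j / 2) U *
            coeff n (X * g * f₁ * (f₁ * f₂) ^ (j / 2 - 1)) := by
          simp [hwdef, hj2]
        rw [h1]
        have hdar : dar b g f₁ f₂ n j = coeff n (X * g * f₁ * (f₁ * f₂) ^ ((j - 2) / 2)) := by
          rw [dar, if_neg hj0, if_neg (by omega)]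
        have he : j / 2 - 1 = (j - 2) / 2 := by omega
        rw [hdar, he]; ring
    · rw [if_neg (by simpa using hc), if_neg (by simpa using hc), mul_zero]
  rw [Finset.sum_congr rfl step, sum_sieve n 0 w hwz, Finset.sum_range_succ' w n]
  have h0 : w 0 = coeff 0 U * coeff n b := by simp [hwdef]
  have hs : ∀ i, w (i + 1) = coeff (i + 1) U * coeff n (X * g * f₁ * (f₁ * f₂) ^ i) := by
    intro i; simp [hwdef]
  rw [h0, coeff_mul_psComp _ _ _ hF0, Finset.sum_range_succ]
  rw [coeff_mk, coeff_zero_of_lt (hdvd n) (by omega), mul_zero, add_zero, add_comm]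
  congr 1
  refine Finset.sum_congr rfl fun i _ => ?_
  rw [hs i, coeff_mk]

/-- Production matrix of a double almost-Riordan array:
`P = (W(t), tZ₁(t), Z₂(t), tA(t), t²A(t), …)` satisfies `D·P = D` with first two rows deleted. -/
theorem dar_production_matrix
    (b g f₁ f₂ : PowerSeries K)
    (hbe : ∀ k, coeff (2 * k + 1) b = 0)
    (hge : ∀ k, coeff (2 * k + 1) g = 0)
    (hb0 : constantCoeff b ≠ 0)
    (hg0 : constantCoeff g ≠ 0)
    (hf₁o : ∀ k, coeff (2 * k) f₁ = 0)
    (hf₂o : ∀ k, coeff (2 * k) f₂ = 0)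
    (hf₁1 : coeff 1 f₁ ≠ 0)
    (hf₂1 : coeff 1 f₂ ≠ 0)
    (At Z₁t Z₂t Wt : PowerSeries K)
    (hA : f₁ * f₂ = X ^ 2 * psComp At (f₁ * f₂))
    (hZ₁ : g * (1 - X ^ 2 * psComp Z₁t (f₁ * f₂)) = C (constantCoeff g))
    (hZ₂ : C (constantCoeff b) * X ^ 2 * g * psComp Z₂t (f₁ * f₂) =
        C (constantCoeff g * coeff 1 f₁) * X ^ 2 * g +
          f₂ * (C (constantCoeff b) * g * f₁ -
            C (constantCoeff g * coeff 1 f₁) * X * b))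
    (hW : C (constantCoeff b) * f₂ * (b - C (constantCoeff b)) =
        C (coeff 2 b) * X ^ 2 * b * f₂ +
          X ^ 3 * g * (C (constantCoeff b) * psComp Wt (f₁ * f₂) - C (coeff 2 b)))
    (P : ℕ → ℕ → K)
    (hP0 : ∀ j, P j 0 = coeff j (psComp Wt (X ^ 2)))
    (hP1 : ∀ j, P j 1 = coeff j (X * psComp Z₁t (X ^ 2)))
    (hP2 : ∀ j, P j 2 = coeff j (psComp Z₂t (X ^ 2)))
    (hPk : ∀ j k, 3 ≤ k → P j k = coeff j (X ^ (k - 2) * psComp At (X ^ 2))) :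
    ∀ n k : ℕ,
      ∑ j ∈ Finset.range (n + 1), dar b g f₁ f₂ n j * P j k =
        dar b g f₁ f₂ (n + 2) k := by
  classical
  intro n k
  have hf₁0 : coeff 0 f₁ = 0 := by simpa using hf₁o 0
  have hf₂0 : coeff 0 f₂ = 0 := by simpa using hf₂o 0
  have hf₂2 : coeff 2 f₂ = 0 := by simpa using hf₂o 1
  have hb1 : coeff 1 b = 0 := by simpa using hbe 0
  have hg1 : coeff 1 g = 0 := by simpa using hge 0
  have hant : ∀ (u v : PowerSeries K) (m : ℕ),
      coeff m (u * v) = ∑ i ∈ range (m + 1), coeff i u * coeff (m - i) v :=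
    fun u v m => by rw [coeff_mul, Finset.Nat.sum_antidiagonal_eq_sum_range_succ_mk]
  have hF0 : constantCoeff (f₁ * f₂) = 0 := by
    rw [map_mul, ← coeff_zero_eq_constantCoeff_apply, hf₁0, zero_mul]
  have hF1 : coeff 1 (f₁ * f₂) = 0 := by
    rw [hant]
    simp [Finset.sum_range_succ, hf₁0, hf₂0]
  have hF2 : (X : PowerSeries K) ^ 2 ∣ f₁ * f₂ := by
    rw [X_pow_dvd_iff]
    intro m hm
    interval_cases m
    · rw [coeff_zero_eq_constantCoeff_apply]; exact hF0
    · exact hF1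
  have hXf₁ : (X : PowerSeries K) ∣ f₁ :=
    X_dvd_iff.mpr (by rw [← coeff_zero_eq_constantCoeff_apply]; exact hf₁0)
  have hf₁ne : f₁ ≠ 0 := fun h => hf₁1 (by rw [h]; simp)
  have hf₂ne : f₂ ≠ 0 := fun h => hf₂1 (by rw [h]; simp)
  have hFne : f₁ * f₂ ≠ 0 := mul_ne_zero hf₁ne hf₂ne
  have hCb : (C (constantCoeff b)) ≠ 0 := fun h => hb0 (by
    have := congrArg (constantCoeff) h
    simpa using this)
  have cXp : ∀ (S : PowerSeries K) (m d : ℕ), coeff (d + m) (X ^ m * S) = coeff d S :=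
    fun S m d => coeff_X_pow_mul S m d
  have c00 : ∀ u v : PowerSeries K, coeff 0 (u * v) = coeff 0 u * coeff 0 v :=
    fun u v => by rw [hant]; simp
  have cps0 : ∀ U h : PowerSeries K, coeff 0 (psComp U h) = coeff 0 U := by
    intro U h; rw [psComp, coeff_mk]; simp
  have cX3 : ∀ S : PowerSeries K, coeff 3 ((X : PowerSeries K) ^ 3 * S) = constantCoeff S :=
    fun S => by simpa using cXp S 3 0
  have cX32 : ∀ S : PowerSeries K, coeff 3 ((X : PowerSeries K) ^ 2 * S) = coeff 1 S :=
    fun S => by simpa using cXp S 2 1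
  have cX2 : ∀ S : PowerSeries K, coeff 2 ((X : PowerSeries K) ^ 2 * S) = constantCoeff S :=
    fun S => by simpa using cXp S 2 0
  obtain rfl | rfl | rfl | hk3 : k = 0 ∨ k = 1 ∨ k = 2 ∨ 3 ≤ k := by omega
  · -- k = 0
    rw [Finset.sum_congr rfl (fun j _ => by
      rw [hP0 j, show psComp Wt ((X : PowerSeries K) ^ 2)
          = X ^ 0 * psComp Wt ((X : PowerSeries K) ^ 2) by rw [pow_zero, one_mul],
        coeff_psComp_sq]),
      helperC b g f₁ f₂ Wt hF2 hF0 hXf₁ n]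
    -- scalar relation b₀ * w₀ = b₂
    have h3 := congrArg (coeff 3) hW
    have e1 : C (constantCoeff b) * f₂ * (b - C (constantCoeff b))
        = C (constantCoeff b) * (f₂ * (b - C (constantCoeff b))) := by ring
    have e2 : C (coeff 2 b) * X ^ 2 * b * f₂ +
          X ^ 3 * g * (C (constantCoeff b) * psComp Wt (f₁ * f₂) - C (coeff 2 b))
        = X ^ 2 * (C (coeff 2 b) * (b * f₂)) +
          X ^ 3 * (g * (C (constantCoeff b) * psComp Wt (f₁ * f₂) - C (coeff 2 b))) := by
      ring
    have c1 : coeff 3 ((X : PowerSeries K) ^ 2 * (C (coeff 2 b) * (b * f₂)))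
        = coeff 2 b * (constantCoeff b * coeff 1 f₂) := by
      rw [cX32, coeff_C_mul, hant b f₂ 1]
      simp [Finset.sum_range_succ, hf₂0, coeff_zero_eq_constantCoeff_apply]
    have c2 : coeff 3 ((X : PowerSeries K) ^ 3 *
          (g * (C (constantCoeff b) * psComp Wt (f₁ * f₂) - C (coeff 2 b))))
        = constantCoeff g * (constantCoeff b * coeff 0 Wt - coeff 2 b) := by
      rw [cX3, map_mul, map_sub, map_mul, constantCoeff_C, constantCoeff_C,
        show constantCoeff (psComp Wt (f₁ * f₂)) = coeff 0 Wt from by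
          rw [← coeff_zero_eq_constantCoeff_apply, cps0]]
    have c3 : coeff 3 (C (constantCoeff b) * (f₂ * (b - C (constantCoeff b))))
        = constantCoeff b * (coeff 1 f₂ * coeff 2 b) := by
      rw [coeff_C_mul, hant f₂ (b - C (constantCoeff b)) 3]
      simp [Finset.sum_range_succ, hf₂0, hf₂2, map_sub, coeff_C, hb1,
        coeff_zero_eq_constantCoeff_apply]
    rw [e1, e2, map_add, c1, c2, c3] at h3
    have hw0 : constantCoeff b * coeff 0 Wt = coeff 2 b := by
      apply mul_left_cancel₀ hg0
      linear_combination -h3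
    have hw0C : C (constantCoeff b) * C (coeff 0 Wt) = C (coeff 2 b) := by
      rw [← map_mul, hw0]
    have hsplit := psComp_shift Wt (f₁ * f₂) hF0
    have key : (X : PowerSeries K) ^ 2 *
          (C (coeff 0 Wt) * b +
            X * g * f₁ * psComp (mk fun i => coeff (i + 1) Wt) (f₁ * f₂))
        = b - C (constantCoeff b) := by
      apply mul_left_cancel₀ (mul_ne_zero (mul_ne_zero hCb hFne) hf₂ne)
      linear_combination (-(f₁ * f₂)) * hW -
        (C (constantCoeff b) * X ^ 3 * g * (f₁ * f₂)) * hsplit +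
        ((X : PowerSeries K) ^ 2 * (f₁ * f₂) * f₂ * b - X ^ 3 * g * (f₁ * f₂)) * hw0C
    calc coeff 0 Wt * coeff n b +
          coeff n (X * g * f₁ * psComp (mk fun i => coeff (i + 1) Wt) (f₁ * f₂))
        = coeff n (C (coeff 0 Wt) * b +
            X * g * f₁ * psComp (mk fun i => coeff (i + 1) Wt) (f₁ * f₂)) := by
          rw [map_add, coeff_C_mul]
      _ = coeff (n + 2) ((X : PowerSeries K) ^ 2 *
            (C (coeff 0 Wt) * b +
              X * g * f₁ * psComp (mk fun i => coeff (i + 1) Wt) (f₁ * f₂))) :=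
          (cXp _ 2 n).symm
      _ = coeff (n + 2) (b - C (constantCoeff b)) := by rw [key]
      _ = dar b g f₁ f₂ (n + 2) 0 := by
          rw [map_sub, coeff_C, if_neg (by omega), sub_zero, dar, if_pos rfl]
  · -- k = 1
    rw [Finset.sum_congr rfl (fun j _ => by
      rw [hP1 j, show (X : PowerSeries K) * psComp Z₁t ((X : PowerSeries K) ^ 2)
          = X ^ 1 * psComp Z₁t ((X : PowerSeries K) ^ 2) by rw [pow_one],
        coeff_psComp_sq]),
      helperA b g f₁ f₂ Z₁t hF2 hF0 n 1 rfl]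
    have key : (X : PowerSeries K) ^ 2 *
          (X * g * (f₁ * f₂) ^ ((1 - 1) / 2) * psComp Z₁t (f₁ * f₂))
        = X * g * (f₁ * f₂) ^ ((1 - 1) / 2) - C (constantCoeff g) * X := by
      norm_num
      linear_combination (-(X : PowerSeries K)) * hZ₁
    calc coeff n (X * g * (f₁ * f₂) ^ ((1 - 1) / 2) * psComp Z₁t (f₁ * f₂))
        = coeff (n + 2) ((X : PowerSeries K) ^ 2 *
            (X * g * (f₁ * f₂) ^ ((1 - 1) / 2) * psComp Z₁t (f₁ * f₂))) := (cXp _ 2 n).symm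
      _ = coeff (n + 2) (X * g * (f₁ * f₂) ^ ((1 - 1) / 2) - C (constantCoeff g) * X) := by
          rw [key]
      _ = dar b g f₁ f₂ (n + 2) 1 := by
          rw [map_sub, coeff_C_mul, coeff_X, if_neg (by omega), mul_zero, sub_zero,
            dar, if_neg one_ne_zero, if_pos rfl]
  · -- k = 2
    rw [Finset.sum_congr rfl (fun j _ => by
      rw [hP2 j, show psComp Z₂t ((X : PowerSeries K) ^ 2)
          = X ^ 0 * psComp Z₂t ((X : PowerSeries K) ^ 2) by rw [pow_zero, one_mul],
        coeff_psComp_sq]),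
      helperC b g f₁ f₂ Z₂t hF2 hF0 hXf₁ n]
    -- scalar relation b₀ * z₀ = g₀ * f₁₁
    have h2 := congrArg (coeff 2) hZ₂
    have e1 : C (constantCoeff b) * X ^ 2 * g * psComp Z₂t (f₁ * f₂)
        = X ^ 2 * (C (constantCoeff b) * (g * psComp Z₂t (f₁ * f₂))) := by ring
    have e2 : C (constantCoeff g * coeff 1 f₁) * X ^ 2 * g +
          f₂ * (C (constantCoeff b) * g * f₁ -
            C (constantCoeff g * coeff 1 f₁) * X * b)
        = X ^ 2 * (C (constantCoeff g * coeff 1 f₁) * g) +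
          f₂ * (C (constantCoeff b) * g * f₁ -
            C (constantCoeff g * coeff 1 f₁) * X * b) := by ring
    have c1 : coeff 2 ((X : PowerSeries K) ^ 2 *
          (C (constantCoeff b) * (g * psComp Z₂t (f₁ * f₂))))
        = constantCoeff b * (constantCoeff g * coeff 0 Z₂t) := by
      rw [cX2, map_mul, map_mul, constantCoeff_C,
        show constantCoeff (psComp Z₂t (f₁ * f₂)) = coeff 0 Z₂t from by
          rw [← coeff_zero_eq_constantCoeff_apply, cps0]]
    have c2 : coeff 2 ((X : PowerSeries K) ^ 2 *
          (C (constantCoeff g * coeff 1 f₁) * g))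
        = constantCoeff g * coeff 1 f₁ * constantCoeff g := by
      rw [cX2, map_mul, constantCoeff_C]
    have hXb : coeff 1 ((X : PowerSeries K) * b) = constantCoeff b := by
      rw [show (X : PowerSeries K) * b = X ^ 1 * b from by rw [pow_one]]
      simpa using cXp b 1 0
    have cin : coeff 1 (C (constantCoeff b) * g * f₁ -
          C (constantCoeff g * coeff 1 f₁) * X * b) = 0 := by
      rw [map_sub, mul_assoc, coeff_C_mul, mul_assoc, coeff_C_mul, hant g f₁ 1, hXb]
      simp [Finset.sum_range_succ, hf₁0, hg1, coeff_zero_eq_constantCoeff_apply]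
      ring
    have cin0 : coeff 0 (C (constantCoeff b) * g * f₁ -
          C (constantCoeff g * coeff 1 f₁) * X * b) = 0 := by
      rw [map_sub, mul_assoc, coeff_C_mul, mul_assoc, coeff_C_mul, c00, c00, hf₁0]
      simp
    have c3 : coeff 2 (f₂ * (C (constantCoeff b) * g * f₁ -
          C (constantCoeff g * coeff 1 f₁) * X * b)) = 0 := by
      rw [hant]
      have hsum : ∑ i ∈ range (2 + 1), coeff i f₂ * coeff (2 - i)
            (C (constantCoeff b) * g * f₁ -
              C (constantCoeff g * coeff 1 f₁) * X * b)
          = coeff 0 f₂ * coeff 2 (C (constantCoeff b) * g * f₁ -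
              C (constantCoeff g * coeff 1 f₁) * X * b) +
            coeff 1 f₂ * coeff 1 (C (constantCoeff b) * g * f₁ -
              C (constantCoeff g * coeff 1 f₁) * X * b) +
            coeff 2 f₂ * coeff 0 (C (constantCoeff b) * g * f₁ -
              C (constantCoeff g * coeff 1 f₁) * X * b) := by
        rw [Finset.sum_range_succ, Finset.sum_range_succ, Finset.sum_range_succ,
          Finset.sum_range_zero, zero_add]
      rw [hsum, hf₂0, hf₂2, cin, cin0]
      ring
    rw [e1, e2, map_add, c1, c2, c3, add_zero] at h2
    have hz : constantCoeff b * coeff 0 Z₂t = constantCoeff g * coeff 1 f₁ := by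
      apply mul_left_cancel₀ hg0
      linear_combination h2
    have hzC : C (constantCoeff b) * C (coeff 0 Z₂t)
        = C (constantCoeff g * coeff 1 f₁) := by rw [← map_mul, hz]
    have hsplit := psComp_shift Z₂t (f₁ * f₂) hF0
    have key : (X : PowerSeries K) ^ 2 *
          (C (coeff 0 Z₂t) * b +
            X * g * f₁ * psComp (mk fun i => coeff (i + 1) Z₂t) (f₁ * f₂))
        = X * g * f₁ := by
      apply mul_left_cancel₀ (mul_ne_zero hCb hFne)
      linear_combination (X * f₁) * hZ₂ -
        (C (constantCoeff b) * X ^ 3 * g * f₁) * hsplit +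
        ((X : PowerSeries K) ^ 2 * (f₁ * f₂) * b - X ^ 3 * g * f₁) * hzC
    calc coeff 0 Z₂t * coeff n b +
          coeff n (X * g * f₁ * psComp (mk fun i => coeff (i + 1) Z₂t) (f₁ * f₂))
        = coeff n (C (coeff 0 Z₂t) * b +
            X * g * f₁ * psComp (mk fun i => coeff (i + 1) Z₂t) (f₁ * f₂)) := by
          rw [map_add, coeff_C_mul]
      _ = coeff (n + 2) ((X : PowerSeries K) ^ 2 *
            (C (coeff 0 Z₂t) * b +
              X * g * f₁ * psComp (mk fun i => coeff (i + 1) Z₂t) (f₁ * f₂))) :=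
          (cXp _ 2 n).symm
      _ = coeff (n + 2) (X * g * f₁) := by rw [key]
      _ = dar b g f₁ f₂ (n + 2) 2 := by
          rw [dar, if_neg (by norm_num), if_neg (by norm_num)]
          norm_num
  · -- k ≥ 3
    rcases Nat.even_or_odd k with hke | hko
    · -- k even, k ≥ 4
      have hkm : k % 2 = 0 := Nat.even_iff.mp hke
      rw [Finset.sum_congr rfl (fun j _ => by rw [hPk j k hk3, coeff_psComp_sq]),
        helperB b g f₁ f₂ At hF2 hF0 hXf₁ n (k - 2) (by omega) (by omega)]
      have key : (X : PowerSeries K) ^ 2 *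
            (X * g * f₁ * (f₁ * f₂) ^ ((k - 2 - 2) / 2) * psComp At (f₁ * f₂))
          = X * g * f₁ * (f₁ * f₂) ^ ((k - 2) / 2) := by
        have he : (k - 2) / 2 = (k - 2 - 2) / 2 + 1 := by omega
        rw [he, pow_succ]
        linear_combination (-(X * g * f₁ * (f₁ * f₂) ^ ((k - 2 - 2) / 2))) * hA
      calc coeff n (X * g * f₁ * (f₁ * f₂) ^ ((k - 2 - 2) / 2) * psComp At (f₁ * f₂))
          = coeff (n + 2) ((X : PowerSeries K) ^ 2 *
              (X * g * f₁ * (f₁ * f₂) ^ ((k - 2 - 2) / 2) * psComp At (f₁ * f₂))) :=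
            (cXp _ 2 n).symm
        _ = coeff (n + 2) (X * g * f₁ * (f₁ * f₂) ^ ((k - 2) / 2)) := by rw [key]
        _ = dar b g f₁ f₂ (n + 2) k := by
            rw [dar, if_neg (by omega), if_neg (by omega)]
    · -- k odd
      have hkm : k % 2 = 1 := Nat.odd_iff.mp hko
      rw [Finset.sum_congr rfl (fun j _ => by rw [hPk j k hk3, coeff_psComp_sq]),
        helperA b g f₁ f₂ At hF2 hF0 n (k - 2) (by omega)]
      have key : (X : PowerSeries K) ^ 2 *
            (X * g * (f₁ * f₂) ^ ((k - 2 - 1) / 2) * psComp At (f₁ * f₂))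
          = X * g * (f₁ * f₂) ^ ((k - 1) / 2) := by
        have he : (k - 1) / 2 = (k - 2 - 1) / 2 + 1 := by omega
        rw [he, pow_succ]
        linear_combination (-(X * g * (f₁ * f₂) ^ ((k - 2 - 1) / 2))) * hA
      calc coeff n (X * g * (f₁ * f₂) ^ ((k - 2 - 1) / 2) * psComp At (f₁ * f₂))
          = coeff (n + 2) ((X : PowerSeries K) ^ 2 *
              (X * g * (f₁ * f₂) ^ ((k - 2 - 1) / 2) * psComp At (f₁ * f₂))) :=
            (cXp _ 2 n).symm
        _ = coeff (n + 2) (X * g * (f₁ * f₂) ^ ((k - 1) / 2)) := by rw [key]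
        _ = dar b g f₁ f₂ (n + 2) k := by
            rw [dar, if_neg (by omega), if_pos hkm]
end
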